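/- Let g be a symmetric invertible 4×4 real matrix with det g < 0 and let W have Weyl symmetries with respect to g. Then for all d,e,a,b,c,h in Fin 4: (1/2) g_{bc} Σ_{p,q,r} (1/2) W_{pq}{}^{de} g_{ra} η^{pqr}{}_h + δ_b{}^{e} Σ_{p,q,r} (1/2) W_{pqc}{}^{d} g_{ra} η^{pqr}{}_h + δ_c{}^{e} Σ_{p,q,r} (1/2) W_{pqb}{}^{d} g_{ra} η^{pqr}{}_h = −δ_c{}^{e} (W*)^{d}{}_{bah} − δ_b{}^{e} (W*)^{d}{}_{cah} + (1/2) g_{bc} (W*)^{de}{}_{ah}. (This is the component form of the identity expressing the 1-form Ω^{de}{}_{abc} = (1/2) g_{bc} *(W^{de}∧θ_a) + 2 δ^{e}{}_{(b} *(W_{c)}{}^{d}∧θ_a) in terms of the dual Weyl tensor, where for a 3-form with coefficients F_{pqr} the Hodge dual has components Σ_{p,q,r} F_{pqr} η^{pqr}{}_h.) -/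
import Mathlib


open Finset

/-- The Levi-Civita alternating symbol on `Fin 4`: the sign of `(a,b,c,d)` as a
permutation of `(0,1,2,3)`, and `0` if two indices coincide. -/
noncomputable def eps4 (a b c d : Fin 4) : ℝ :=
  (((b : ℕ) : ℝ) - ((a : ℕ) : ℝ)) * (((c : ℕ) : ℝ) - ((a : ℕ) : ℝ)) *
    (((d : ℕ) : ℝ) - ((a : ℕ) : ℝ)) * (((c : ℕ) : ℝ) - ((b : ℕ) : ℝ)) *
    (((d : ℕ) : ℝ) - ((b : ℕ) : ℝ)) * (((d : ℕ) : ℝ) - ((c : ℕ) : ℝ)) / 12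

/-- The volume element `η_{abcd} = √(−det g)·ε_{abcd}`. -/
noncomputable def eta4 (g : Fin 4 → Fin 4 → ℝ) (a b c d : Fin 4) : ℝ :=
  Real.sqrt (-(Matrix.of g).det) * eps4 a b c d

/-- `η^{pqr}{}_s`, obtained by raising the first three indices of `η` with `g^{ab}`. -/
noncomputable def etaUp3 (g ginv : Fin 4 → Fin 4 → ℝ) (p q r s : Fin 4) : ℝ :=
  ∑ a, ∑ b, ∑ c, ginv p a * ginv q b * ginv r c * eta4 g a b c s

/-- The right dual of the Weyl tensor, `(W*)_{abcd} = (1/2) η_{cd}{}^{eh} W_{abeh}`. -/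
noncomputable def Wstar (g ginv : Fin 4 → Fin 4 → ℝ)
    (W : Fin 4 → Fin 4 → Fin 4 → Fin 4 → ℝ) (a b c d : Fin 4) : ℝ :=
  (1 / 2) * ∑ e, ∑ h, (∑ m, ∑ n, ginv e m * ginv h n * eta4 g c d m n) * W a b e h

lemma eps4_pairswap (a b c d : Fin 4) : eps4 a b c d = eps4 c d a b := by
  unfold eps4; ring

lemma eta4_pairswap (g : Fin 4 → Fin 4 → ℝ) (a b c d : Fin 4) :
    eta4 g a b c d = eta4 g c d a b := by
  unfold eta4; rw [eps4_pairswap]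

/-- rotate three nested sums: bring the first index to the back -/
lemma sum3_rot' (f : Fin 4 → Fin 4 → Fin 4 → ℝ) :
    ∑ x : Fin 4, ∑ y : Fin 4, ∑ z : Fin 4, f x y z
      = ∑ y : Fin 4, ∑ z : Fin 4, ∑ x : Fin 4, f x y z := by
  rw [Finset.sum_comm]
  exact Finset.sum_congr rfl fun y _ => Finset.sum_comm

/-- rotate three nested sums: bring the last index to the front -/
lemma sum3_rot (f : Fin 4 → Fin 4 → Fin 4 → ℝ) :
    ∑ p : Fin 4, ∑ q : Fin 4, ∑ m : Fin 4, f p q m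
      = ∑ m : Fin 4, ∑ p : Fin 4, ∑ q : Fin 4, f p q m := by
  have h : ∀ p, ∑ q : Fin 4, ∑ m : Fin 4, f p q m
      = ∑ m : Fin 4, ∑ q : Fin 4, f p q m := fun p => Finset.sum_comm
  simp_rw [h]
  exact Finset.sum_comm

lemma sum4_swap (f : Fin 4 → Fin 4 → Fin 4 → Fin 4 → ℝ) :
    ∑ p : Fin 4, ∑ q : Fin 4, ∑ m : Fin 4, ∑ n : Fin 4, f p q m n
      = ∑ m : Fin 4, ∑ n : Fin 4, ∑ p : Fin 4, ∑ q : Fin 4, f p q m n := by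
  have h1 : ∀ p, ∑ q : Fin 4, ∑ m : Fin 4, ∑ n : Fin 4, f p q m n
      = ∑ m : Fin 4, ∑ n : Fin 4, ∑ q : Fin 4, f p q m n :=
    fun p => sum3_rot' (fun q m n => f p q m n)
  simp_rw [h1]
  exact sum3_rot' (fun p m n => ∑ q, f p q m n)

/-- contraction of the third raised index of `η` with `g r a` -/
lemma key (g ginv : Fin 4 → Fin 4 → ℝ) (a h : Fin 4)
    (hcontr : ∀ c', (∑ r, g r a * ginv r c') = if c' = a then 1 else 0)
    (F : Fin 4 → Fin 4 → ℝ) :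
    (∑ p, ∑ q, ∑ r, F p q * g r a * etaUp3 g ginv p q r h)
      = ∑ p, ∑ q, F p q * ∑ m, ∑ n, ginv p m * ginv q n * eta4 g a h m n := by
  refine Finset.sum_congr rfl fun p _ => Finset.sum_congr rfl fun q _ => ?_
  have step1 : (∑ r, F p q * g r a * etaUp3 g ginv p q r h)
      = F p q * ∑ r, g r a * etaUp3 g ginv p q r h := by
    rw [Finset.mul_sum]
    exact Finset.sum_congr rfl fun r _ => by ring
  rw [step1]
  congr 1
  simp only [etaUp3, Finset.mul_sum]
  rw [Finset.sum_comm]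
  refine Finset.sum_congr rfl fun m _ => ?_
  rw [Finset.sum_comm]
  refine Finset.sum_congr rfl fun n _ => ?_
  rw [Finset.sum_comm]
  have hterm : ∀ c', (∑ r, g r a * (ginv p m * ginv q n * ginv r c' * eta4 g m n c' h))
      = (if c' = a then 1 else 0) * (ginv p m * ginv q n * eta4 g m n c' h) := by
    intro c'
    rw [← hcontr c', Finset.sum_mul]
    exact Finset.sum_congr rfl fun r _ => by ring
  simp_rw [hterm]
  simp only [ite_mul, one_mul, zero_mul]
  rw [Finset.sum_ite_eq' Finset.univ a (fun c' => ginv p m * ginv q n * eta4 g m n c' h)]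
  simp [eta4_pairswap g m n a h]

/-- moving a pair of contracted indices across, using the pair symmetry of `V` -/
lemma pairmove (E : Fin 4 → Fin 4 → ℝ) (V : Fin 4 → Fin 4 → Fin 4 → Fin 4 → ℝ)
    (hV : ∀ p q m n, V p q m n = V m n p q) (u v : Fin 4 → ℝ) :
    (∑ p, ∑ q, (1 / 2 : ℝ) * (∑ m, ∑ n, u m * v n * V p q m n) * E p q)
      = ∑ p, ∑ q, u p * v q * ((1 / 2) * ∑ m, ∑ n, E m n * V p q m n) := by
  calc (∑ p, ∑ q, (1 / 2 : ℝ) * (∑ m, ∑ n, u m * v n * V p q m n) * E p q)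
      = ∑ p, ∑ q, ∑ m, ∑ n, u m * v n * ((1 / 2) * (E p q * V m n p q)) := by
        refine Finset.sum_congr rfl fun p _ => Finset.sum_congr rfl fun q _ => ?_
        simp only [Finset.mul_sum, Finset.sum_mul]
        refine Finset.sum_congr rfl fun m _ => Finset.sum_congr rfl fun n _ => ?_
        rw [hV p q m n]; ring
    _ = ∑ m, ∑ n, ∑ p, ∑ q, u m * v n * ((1 / 2) * (E p q * V m n p q)) :=
        sum4_swap _
    _ = ∑ m, ∑ n, u m * v n * ((1 / 2) * ∑ p, ∑ q, E p q * V m n p q) := by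
        refine Finset.sum_congr rfl fun m _ => Finset.sum_congr rfl fun n _ => ?_
        simp only [Finset.mul_sum]

/-- moving a single contracted index across, using antisymmetry -/
lemma singlemove (E : Fin 4 → Fin 4 → ℝ) (X Y : Fin 4 → Fin 4 → Fin 4 → ℝ)
    (hXY : ∀ p q m, X p q m = - Y m p q) (u : Fin 4 → ℝ) :
    (∑ p, ∑ q, (1 / 2 : ℝ) * (∑ m, u m * X p q m) * E p q)
      = - ∑ m, u m * ((1 / 2) * ∑ p, ∑ q, E p q * Y m p q) := by
  calc (∑ p, ∑ q, (1 / 2 : ℝ) * (∑ m, u m * X p q m) * E p q)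
      = ∑ p, ∑ q, ∑ m, -(u m * ((1 / 2) * (E p q * Y m p q))) := by
        refine Finset.sum_congr rfl fun p _ => Finset.sum_congr rfl fun q _ => ?_
        simp only [Finset.mul_sum, Finset.sum_mul]
        refine Finset.sum_congr rfl fun m _ => ?_
        rw [hXY p q m]; ring
    _ = ∑ m, ∑ p, ∑ q, -(u m * ((1 / 2) * (E p q * Y m p q))) := sum3_rot _
    _ = - ∑ m, u m * ((1 / 2) * ∑ p, ∑ q, E p q * Y m p q) := by
        rw [← Finset.sum_neg_distrib]
        refine Finset.sum_congr rfl fun m _ => ?_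
        simp only [Finset.mul_sum, Finset.sum_neg_distrib]

/-- Component form of the identity expressing the 1-form
`Ω^{de}{}_{abc} = (1/2) g_{bc} *(W^{de}∧θ_a) + 2 δ^{e}{}_{(b} *(W_{c)}{}^{d}∧θ_a)`
in terms of the dual Weyl tensor. -/
theorem omega_in_terms_of_dual_weyl
    (g ginv : Fin 4 → Fin 4 → ℝ)
    (hg : ∀ a b, g a b = g b a)
    (hginv : ∀ a b, ∑ c, ginv a c * g c b = if a = b then (1 : ℝ) else 0)
    (hdet : (Matrix.of g).det < 0)
    (W : Fin 4 → Fin 4 → Fin 4 → Fin 4 → ℝ)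
    (hW1 : ∀ a b c d, W a b c d = - W b a c d)
    (hW2 : ∀ a b c d, W a b c d = - W a b d c)
    (hW3 : ∀ a b c d, W a b c d = W c d a b)
    (hW4 : ∀ a b c d, W a b c d + W a c d b + W a d b c = 0)
    (hWtr : ∀ b d, ∑ a, ∑ c, ginv a c * W a b c d = 0)
    (d e a b c h : Fin 4) :
    (1 / 2) * g b c *
        (∑ p, ∑ q, ∑ r,
          (1 / 2) * (∑ m, ∑ n, ginv d m * ginv e n * W p q m n) * g r a *
            etaUp3 g ginv p q r h)
      + (if b = e then (1 : ℝ) else 0) *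
        (∑ p, ∑ q, ∑ r,
          (1 / 2) * (∑ m, ginv d m * W p q c m) * g r a * etaUp3 g ginv p q r h)
      + (if c = e then (1 : ℝ) else 0) *
        (∑ p, ∑ q, ∑ r,
          (1 / 2) * (∑ m, ginv d m * W p q b m) * g r a * etaUp3 g ginv p q r h)
      = -(if c = e then (1 : ℝ) else 0) * (∑ p, ginv d p * Wstar g ginv W p b a h)
        - (if b = e then (1 : ℝ) else 0) * (∑ p, ginv d p * Wstar g ginv W p c a h)
        + (1 / 2) * g b c * (∑ p, ∑ q, ginv d p * ginv e q * Wstar g ginv W p q a h) := by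
    -- symmetry of the inverse metric
  have hNM : (Matrix.of ginv) * (Matrix.of g) = 1 := by
    ext x y
    simpa [Matrix.mul_apply, Matrix.one_apply] using hginv x y
  have hMinv : Matrix.of ginv = (Matrix.of g)⁻¹ := (Matrix.inv_eq_left_inv hNM).symm
  have hgsymM : Matrix.transpose (Matrix.of g) = Matrix.of g := by
    ext x y; exact hg y x
  have hsymM : Matrix.transpose (Matrix.of ginv) = Matrix.of ginv := by
    rw [hMinv, Matrix.transpose_nonsing_inv, hgsymM]
  have gsym : ∀ x y, ginv x y = ginv y x := by
    intro x y
    have := congrFun (congrFun hsymM x) y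
    simpa [Matrix.transpose_apply] using this.symm
  have hcontr : ∀ c', (∑ r, g r a * ginv r c') = if c' = a then 1 else 0 := by
    intro c'
    rw [← hginv c' a]
    exact Finset.sum_congr rfl fun r _ => by rw [gsym r c']; ring
  -- abbreviation for the raised volume form with the last pair (a, h)
  set E : Fin 4 → Fin 4 → ℝ :=
    fun p q => ∑ m, ∑ n, ginv p m * ginv q n * eta4 g a h m n with hE
  have hWstar : ∀ x y, Wstar g ginv W x y a h
      = (1 / 2) * ∑ m, ∑ n, E m n * W x y m n := fun x y => rfl
  have H1 : (∑ p, ∑ q, ∑ r,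
        (1 / 2) * (∑ m, ∑ n, ginv d m * ginv e n * W p q m n) * g r a *
          etaUp3 g ginv p q r h)
      = ∑ p, ∑ q, ginv d p * ginv e q * Wstar g ginv W p q a h := by
    calc (∑ p, ∑ q, ∑ r,
          (1 / 2) * (∑ m, ∑ n, ginv d m * ginv e n * W p q m n) * g r a *
            etaUp3 g ginv p q r h)
        = ∑ p, ∑ q, (1 / 2) * (∑ m, ∑ n, ginv d m * ginv e n * W p q m n) * E p q :=
          key g ginv a h hcontr _
      _ = ∑ p, ∑ q, ginv d p * ginv e q * ((1 / 2) * ∑ m, ∑ n, E m n * W p q m n) :=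
          pairmove E W hW3 (ginv d) (ginv e)
      _ = ∑ p, ∑ q, ginv d p * ginv e q * Wstar g ginv W p q a h := by
          simp_rw [hWstar]
  have hanti : ∀ x p q m, W p q x m = - W m x p q := by
    intro x p q m
    rw [hW3 p q x m, hW1 x m p q]
  have H2 : (∑ p, ∑ q, ∑ r,
        (1 / 2) * (∑ m, ginv d m * W p q c m) * g r a * etaUp3 g ginv p q r h)
      = - ∑ p, ginv d p * Wstar g ginv W p c a h := by
    calc (∑ p, ∑ q, ∑ r,
          (1 / 2) * (∑ m, ginv d m * W p q c m) * g r a * etaUp3 g ginv p q r h)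
        = ∑ p, ∑ q, (1 / 2) * (∑ m, ginv d m * W p q c m) * E p q :=
          key g ginv a h hcontr _
      _ = - ∑ m, ginv d m * ((1 / 2) * ∑ p, ∑ q, E p q * W m c p q) :=
          singlemove E (fun p q m => W p q c m) (fun m p q => W m c p q)
            (hanti c) (ginv d)
      _ = - ∑ p, ginv d p * Wstar g ginv W p c a h := by
          simp_rw [hWstar]
  have H3 : (∑ p, ∑ q, ∑ r,
        (1 / 2) * (∑ m, ginv d m * W p q b m) * g r a * etaUp3 g ginv p q r h)
      = - ∑ p, ginv d p * Wstar g ginv W p b a h := by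
    calc (∑ p, ∑ q, ∑ r,
          (1 / 2) * (∑ m, ginv d m * W p q b m) * g r a * etaUp3 g ginv p q r h)
        = ∑ p, ∑ q, (1 / 2) * (∑ m, ginv d m * W p q b m) * E p q :=
          key g ginv a h hcontr _
      _ = - ∑ m, ginv d m * ((1 / 2) * ∑ p, ∑ q, E p q * W m b p q) :=
          singlemove E (fun p q m => W p q b m) (fun m p q => W m b p q)
            (hanti b) (ginv d)
      _ = - ∑ p, ginv d p * Wstar g ginv W p b a h := by
          simp_rw [hWstar]
  rw [H1, H2, H3]
  ring
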